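/- Let γ ∈ ℝ, γ ≠ 0, and β > 0. Consider the 4×4 complex matrix M with rows (1, 0, −e^{iγ'}, −e^{−iγ'}), (0, 1, −e^{−iγ'}, −e^{iγ'}), (−β, 0, −iγ' e^{iγ'}, iγ' e^{−iγ'}), (0, β, iγ' e^{−iγ'}, −iγ' e^{iγ'}) where γ' = i|γ| is purely imaginary (so e^{iγ'} = e^{−|γ|}). Then det M = (e^{−2|γ|} − e^{2|γ|})(β² + γ²)·(a positive constant) ≠ 0; in particular, when β = |β_n| > 0 and γ'² = k²q₀ − |α_n|² < 0 with β² = |α_n|² − k² and the relation β² + |γ|² = k²(1−q₀) > 0, det M = (e^{−2|γ|} − e^{2|γ|})·k²(1−q₀) < 0. -/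

import Mathlib

open Complex

set_option maxHeartbeats 1600000 in
/-- the 4×4 matching matrix for a guided-wave ansatz in a slab.
With `γ' = i|γ|` (so `e^{iγ'} = e^{−|γ|}`) and `β > 0`, its determinant equals
`(e^{−2|γ|} − e^{2|γ|})(|γ|² − β²)`; in particular, under the slab relation
`|γ|² − β² = k²(1−q₀) > 0` (with `k > 0`, `0 < q₀ < 1`) the determinant is
`(e^{−2|γ|} − e^{2|γ|})·k²(1−q₀) < 0`, hence nonzero. -/
theorem slab_matching_determinant (γ β : ℝ) (hγ : γ ≠ 0) (hβ : 0 < β)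
    (g : ℝ) (hg : g = |γ|)
    (γ' : ℂ) (hγ' : γ' = Complex.I * (g : ℂ))
    (M : Matrix (Fin 4) (Fin 4) ℂ)
    (hM : M = Matrix.of
      ![![1, 0, -Complex.exp (Complex.I * γ'), -Complex.exp (-(Complex.I * γ'))],
        ![0, 1, -Complex.exp (-(Complex.I * γ')), -Complex.exp (Complex.I * γ')],
        ![-(β : ℂ), 0, -(Complex.I * γ') * Complex.exp (Complex.I * γ'),
          (Complex.I * γ') * Complex.exp (-(Complex.I * γ'))],
        ![0, (β : ℂ), (Complex.I * γ') * Complex.exp (-(Complex.I * γ')),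
          -(Complex.I * γ') * Complex.exp (Complex.I * γ')]]) :
    M.det = (((Real.exp (-(2 * g)) - Real.exp (2 * g)) * (g ^ 2 - β ^ 2) : ℝ) : ℂ) ∧
    ∀ k q₀ : ℝ, 0 < k → 0 < q₀ → q₀ < 1 → g ^ 2 - β ^ 2 = k ^ 2 * (1 - q₀) →
      M.det = (((Real.exp (-(2 * g)) - Real.exp (2 * g)) * (k ^ 2 * (1 - q₀)) : ℝ) : ℂ) ∧
      M.det.re < 0 ∧ M.det ≠ 0 := by
  have hIγ : Complex.I * γ' = ((-g : ℝ) : ℂ) := by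
    rw [hγ', ← mul_assoc, Complex.I_mul_I]; push_cast; ring
  have he1 : Complex.exp (Complex.I * γ') = ((Real.exp (-g) : ℝ) : ℂ) := by
    rw [hIγ, ← Complex.ofReal_exp]
  have he2 : Complex.exp (-(Complex.I * γ')) = ((Real.exp g : ℝ) : ℂ) := by
    rw [hIγ, ← Complex.ofReal_neg, neg_neg, ← Complex.ofReal_exp]
  have hE2 : Real.exp (-(2 * g)) = Real.exp (-g) * Real.exp (-g) := by
    rw [← Real.exp_add]; ring_nf
  have hF2 : Real.exp (2 * g) = Real.exp g * Real.exp g := by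
    rw [← Real.exp_add]; ring_nf
  have hdet : M.det
      = (((Real.exp (-(2 * g)) - Real.exp (2 * g)) * (g ^ 2 - β ^ 2) : ℝ) : ℂ) := by
    subst hM
    simp [Matrix.det_succ_row_zero, Fin.sum_univ_succ, Fin.succAbove, Fin.castSucc, Fin.castAdd, Fin.castLE, he1, he2, hIγ]
    rw [show Complex.exp (-(2 * (g:ℂ))) = Complex.exp (-(g:ℂ)) * Complex.exp (-(g:ℂ)) by
          rw [← Complex.exp_add]; ring_nf,
        show Complex.exp (2 * (g:ℂ)) = Complex.exp (g:ℂ) * Complex.exp (g:ℂ) by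
          rw [← Complex.exp_add]; ring_nf]
    ring
  have hgpos : 0 < g := hg ▸ abs_pos.mpr hγ
  have hexp_neg : Real.exp (-(2 * g)) - Real.exp (2 * g) < 0 := by
    have := Real.exp_lt_exp.mpr (show -(2 * g) < 2 * g by linarith)
    linarith
  refine ⟨hdet, fun k q₀ hk hq0 hq1 hrel => ?_⟩
  have hpos : 0 < k ^ 2 * (1 - q₀) := by
    have h1 : 0 < 1 - q₀ := by linarith
    positivity
  have hdet2 : M.det
      = (((Real.exp (-(2 * g)) - Real.exp (2 * g)) * (k ^ 2 * (1 - q₀)) : ℝ) : ℂ) := by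
    rw [hdet, hrel]
  refine ⟨hdet2, ?_, ?_⟩
  · rw [hdet2, Complex.ofReal_re]
    exact mul_neg_of_neg_of_pos hexp_neg hpos
  · rw [hdet2]
    exact_mod_cast (mul_neg_of_neg_of_pos hexp_neg hpos).ne
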